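/- Let Γ be a set of cardinality 𝔠⁺, the successor cardinal of the continuum. Then every set A of norm-one elements of c₀(Γ) satisfying ‖f − g‖ > 1 for all distinct f, g ∈ A has cardinality at most 𝔠. -/

import Mathlib

open ZeroAtInfty Cardinal

namespace SepC0Aux

open Set Function Ordinal

universe u

variable {α : Type u}

/-- Restriction of a function to a subset. -/
def restr (T : Set α) (f : α → ℝ) : T → ℝ := fun x => f x

-- A choice of representative in `A` for a given restriction.
open Classical in
noncomputable def rep (A : Set (α → ℝ)) (T : Set α) (r : T → ℝ) : α → ℝ :=
  if h : ∃ f, f ∈ A ∧ restr T f = r then h.choose else 0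

lemma rep_mem {A : Set (α → ℝ)} {T : Set α} {f : α → ℝ} (hf : f ∈ A) :
    rep A T (restr T f) ∈ A := by
  have h : ∃ g, g ∈ A ∧ restr T g = restr T f := ⟨f, hf, rfl⟩
  rw [rep, dif_pos h]
  exact h.choose_spec.1

lemma rep_restr {A : Set (α → ℝ)} {T : Set α} {f : α → ℝ} (hf : f ∈ A) :
    restr T (rep A T (restr T f)) = restr T f := by
  have h : ∃ g, g ∈ A ∧ restr T g = restr T f := ⟨f, hf, rfl⟩
  rw [rep, dif_pos h]
  exact h.choose_spec.2

lemma support_rep_countable (A : Set (α → ℝ))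
    (hcnt : ∀ f ∈ A, (support f).Countable) (T : Set α) (r : T → ℝ) :
    (support (rep A T r)).Countable := by
  rw [rep]
  split
  · next h => exact hcnt _ h.choose_spec.1
  · simp

/-- The set of all chosen representatives for restrictions to `T`. -/
noncomputable def repsSet (A : Set (α → ℝ)) (T : Set α) : Set (α → ℝ) :=
  (fun f => rep A T (restr T f)) '' A

lemma exists_enum {β : Type v} {s : Set β} (hs : s.Countable) :
    ∃ e : ℕ → Option β, {b | ∃ n, e n = some b} = s := by
  rcases s.eq_empty_or_nonempty with h | h
  · exact ⟨fun _ => none, by simp [h]⟩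
  · obtain ⟨f, hf⟩ := hs.exists_eq_range h
    refine ⟨fun n => some (f n), ?_⟩
    ext b
    simp [hf, eq_comm]

lemma mk_restr_le (A : Set (α → ℝ)) (hcnt : ∀ f ∈ A, (support f).Countable)
    (T : Set α) (hT : #T ≤ continuum) : #(restr T '' A) ≤ continuum := by
  have hsupp : ∀ r : restr T '' A, (support (r : T → ℝ)).Countable := by
    rintro ⟨r, f, hf, rfl⟩
    have hsub : support (restr T f) ⊆ Subtype.val ⁻¹' support f := fun x hx => by
      simpa [restr] using hx
    exact ((hcnt f hf).preimage Subtype.val_injective).mono hsub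
  choose e he using fun r : restr T '' A =>
    exists_enum ((hsupp r).image fun x => ((x, (r : T → ℝ) x) : T × ℝ))
  have hinj : Function.Injective e := by
    intro r s hrs
    have hgraph : (fun x => ((x, (r : T → ℝ) x) : T × ℝ)) '' support (r : T → ℝ)
        = (fun x => ((x, (s : T → ℝ) x) : T × ℝ)) '' support (s : T → ℝ) := by
      rw [← he r, ← he s, hrs]
    apply Subtype.ext
    funext x
    by_cases hr : (r : T → ℝ) x = 0
    · by_cases hs' : (s : T → ℝ) x = 0
      · rw [hr, hs']
      · exfalso
        have hmem : ((x, (s : T → ℝ) x) : T × ℝ)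
            ∈ (fun x => ((x, (s : T → ℝ) x) : T × ℝ)) '' support (s : T → ℝ) :=
          Set.mem_image_of_mem _ hs'
        rw [← hgraph] at hmem
        obtain ⟨y, hy, hxy⟩ := hmem
        have h1 : y = x := congrArg Prod.fst hxy
        subst h1
        exact hy (hr ▸ rfl)
    · have hmem : ((x, (r : T → ℝ) x) : T × ℝ)
          ∈ (fun x => ((x, (r : T → ℝ) x) : T × ℝ)) '' support (r : T → ℝ) :=
        Set.mem_image_of_mem _ hr
      rw [hgraph] at hmem
      obtain ⟨y, hy, hxy⟩ := hmem
      have h1 : y = x := congrArg Prod.fst hxy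
      subst h1
      exact (congrArg Prod.snd hxy).symm
  have h1 : #(Option (↥T × ℝ)) ≤ continuum := by
    rw [mk_option, mk_prod, mk_real, lift_continuum, Cardinal.lift_uzero]
    calc #T * continuum + 1 ≤ continuum * continuum + 1 := by
          gcongr
      _ = continuum + 1 := by rw [mul_eq_self aleph0_le_continuum]
      _ = continuum := add_one_eq aleph0_le_continuum
  calc #(restr T '' A) ≤ #(ℕ → Option (↥T × ℝ)) := mk_le_of_injective hinj
    _ ≤ continuum := by
        rw [mk_arrow]
        simp only [mk_nat, lift_aleph0, Cardinal.lift_uzero]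
        calc #(Option (↥T × ℝ)) ^ (ℵ₀ : Cardinal) ≤ continuum ^ (ℵ₀ : Cardinal) :=
              power_le_power_right h1
          _ = continuum := continuum_power_aleph0

/-- The index type: a well-ordered type of order type `ω₁`. -/
abbrev Idx : Type u := (Cardinal.aleph 1 : Cardinal.{u}).ord.ToType

instance idxWO : IsWellOrder Idx.{u} (· < ·) := isWellOrder_lt

/-- The transfinite chain of sets. -/
noncomputable def chainF (A : Set (α → ℝ)) : Idx.{u} → Set α :=
  (IsWellFounded.wf (α := Idx.{u}) (r := (· < ·))).fix
    fun i IH =>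
      (⋃ j : {j // j < i}, IH j j.2) ∪
        ⋃ g : repsSet A (⋃ j : {j // j < i}, IH j j.2), Function.support (g : α → ℝ)

/-- The union of the chain below `i`. -/
noncomputable def prevSet (A : Set (α → ℝ)) (i : Idx.{u}) : Set α :=
  ⋃ j : {j // j < i}, chainF A j

lemma chainF_eq (A : Set (α → ℝ)) (i : Idx.{u}) :
    chainF A i = prevSet A i ∪
      ⋃ g : repsSet A (prevSet A i), Function.support (g : α → ℝ) :=
  WellFounded.fix_eq _ _ i

lemma mk_subtype_lt_le (i : Idx.{u}) : #{j : Idx.{u} // j < i} ≤ aleph 1 := by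
  rw [← Ordinal.card_typein (r := ((· < ·) : Idx.{u} → Idx.{u} → Prop)) i]
  exact (Ordinal.card_le_card (typein_lt_self i).le).trans_eq (card_ord _)

lemma mk_repsSet_le (A : Set (α → ℝ)) (hcnt : ∀ f ∈ A, (support f).Countable)
    (T : Set α) (hT : #T ≤ continuum) : #(repsSet A T) ≤ continuum := by
  have : repsSet A T = rep A T '' (restr T '' A) := Set.image_comp (rep A T) (restr T) A
  rw [this]
  exact (mk_image_le).trans (mk_restr_le A hcnt T hT)

lemma mk_second_le (A : Set (α → ℝ)) (hcnt : ∀ f ∈ A, (support f).Countable)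
    (T : Set α) (hT : #T ≤ continuum) :
    #(⋃ g : repsSet A T, Function.support (g : α → ℝ)) ≤ continuum := by
  calc #(⋃ g : repsSet A T, Function.support (g : α → ℝ))
      ≤ #(repsSet A T) * ⨆ g : repsSet A T, #(Function.support (g : α → ℝ)) :=
        mk_iUnion_le _
    _ ≤ continuum * ℵ₀ := by
        apply mul_le_mul' (mk_repsSet_le A hcnt T hT)
        refine ciSup_le' fun g => ?_
        obtain ⟨g, hg⟩ := g
        obtain ⟨f, hf, rfl⟩ := hg
        exact ((support_rep_countable A hcnt T (restr T f)).le_aleph0)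
    _ ≤ continuum * continuum := by gcongr; exact aleph0_le_continuum
    _ = continuum := mul_eq_self aleph0_le_continuum

lemma mk_chainF_le (A : Set (α → ℝ)) (hcnt : ∀ f ∈ A, (support f).Countable)
    (i : Idx.{u}) : #(chainF A i) ≤ continuum := by
  induction i using WellFoundedLT.induction with
  | ind i IH =>
    have hprev : #(prevSet A i) ≤ continuum := by
      calc #(prevSet A i) ≤ #{j : Idx.{u} // j < i} * ⨆ j : {j // j < i}, #(chainF A j) :=
            mk_iUnion_le _
        _ ≤ aleph 1 * continuum := by
            apply mul_le_mul' (mk_subtype_lt_le i)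
            exact ciSup_le' fun j => IH j j.2
        _ ≤ continuum * continuum := by gcongr; exact aleph_one_le_continuum
        _ = continuum := mul_eq_self aleph0_le_continuum
    rw [chainF_eq]
    calc #((prevSet A i : Set α) ∪ ⋃ g : repsSet A (prevSet A i),
            Function.support (g : α → ℝ) : Set α)
        ≤ #(prevSet A i) + #(⋃ g : repsSet A (prevSet A i), Function.support (g : α → ℝ)) :=
          mk_union_le _ _
      _ ≤ continuum + continuum := add_le_add hprev (mk_second_le A hcnt _ hprev)
      _ = continuum := add_eq_self aleph0_le_continuum

lemma mk_prevSet_le (A : Set (α → ℝ)) (hcnt : ∀ f ∈ A, (support f).Countable)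
    (i : Idx.{u}) : #(prevSet A i) ≤ continuum := by
  calc #(prevSet A i) ≤ #{j : Idx.{u} // j < i} * ⨆ j : {j // j < i}, #(chainF A j) :=
        mk_iUnion_le _
    _ ≤ aleph 1 * continuum := by
        apply mul_le_mul' (mk_subtype_lt_le i)
        exact ciSup_le' fun j => mk_chainF_le A hcnt j
    _ ≤ continuum * continuum := by gcongr; exact aleph_one_le_continuum
    _ = continuum := mul_eq_self aleph0_le_continuum

/-- Key combinatorial lemma: a family of countably-supported real functions of
cardinality greater than the continuum contains two distinct members that agree
on their common support. -/
theorem exists_agree (A : Set (α → ℝ)) (hcnt : ∀ f ∈ A, (support f).Countable)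
    (hbig : continuum < #A) :
    ∃ f ∈ A, ∃ g ∈ A, f ≠ g ∧ ∀ x, f x = g x ∨ f x = 0 ∨ g x = 0 := by
  classical
  let R : Set (α → ℝ) := ⋃ i : Idx.{u}, repsSet A (prevSet A i)
  have hR : #R ≤ continuum := by
    calc #R ≤ #(Idx.{u}) * ⨆ i : Idx.{u}, #(repsSet A (prevSet A i)) := mk_iUnion_le _
      _ ≤ aleph 1 * continuum := by
          apply mul_le_mul'
          · rw [mk_toType, card_ord]
          · exact ciSup_le' fun i => mk_repsSet_le A hcnt _ (mk_prevSet_le A hcnt i)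
      _ ≤ continuum * continuum := by gcongr; exact aleph_one_le_continuum
      _ = continuum := mul_eq_self aleph0_le_continuum
  obtain ⟨g, hgA, hgR⟩ : ∃ g ∈ A, g ∉ R := by
    by_contra h
    push_neg at h
    exact absurd (mk_le_mk_of_subset h) (not_le.mpr (hR.trans_lt hbig))
  let S : Set α := ⋃ i : Idx.{u}, chainF A i
  let B : Set α := Function.support g ∩ S
  have hB : B.Countable := (hcnt g hgA).mono Set.inter_subset_left
  have hx : ∀ x : B, ∃ i : Idx.{u}, (x : α) ∈ chainF A i := fun x => mem_iUnion.1 x.2.2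
  choose idx hidx using hx
  let o : Ordinal := ⨆ x : B, typein ((· < ·) : Idx.{u} → Idx.{u} → Prop) (idx x)
  have ho : o < (aleph 1 : Cardinal.{u}).ord := by
    apply Ordinal.iSup_lt_ord ?_ fun x => typein_lt_self _
    rw [Cardinal.isRegular_aleph_one.cof_eq]
    exact hB.le_aleph0.trans_lt aleph0_lt_aleph_one
  have hsucc : Order.succ o < (aleph 1 : Cardinal.{u}).ord :=
    (isSuccLimit_ord (aleph0_le_aleph 1)).succ_lt ho
  let i' : Idx.{u} := enum ((· < ·) : Idx.{u} → Idx.{u} → Prop)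
    ⟨Order.succ o, by rwa [type_toType]⟩
  have hBprev : B ⊆ prevSet A i' := by
    intro x hxB
    refine mem_iUnion.2 ⟨⟨idx ⟨x, hxB⟩, ?_⟩, hidx ⟨x, hxB⟩⟩
    have h1 : typein ((· < ·) : Idx.{u} → Idx.{u} → Prop) (idx ⟨x, hxB⟩) ≤ o :=
      le_ciSup (Ordinal.bddAbove_range _) _
    have h2 : typein ((· < ·) : Idx.{u} → Idx.{u} → Prop) i' = Order.succ o :=
      typein_enum _ _
    have h3 : typein ((· < ·) : Idx.{u} → Idx.{u} → Prop) (idx ⟨x, hxB⟩)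
        < typein ((· < ·) : Idx.{u} → Idx.{u} → Prop) i' := by
      rw [h2]
      exact h1.trans_lt (Order.lt_succ o)
    exact (typein_lt_typein _).1 h3
  set T : Set α := prevSet A i' with hT
  let f : α → ℝ := rep A T (restr T g)
  have hfA : f ∈ A := rep_mem hgA
  have hfR : f ∈ R := mem_iUnion.2 ⟨i', Set.mem_image_of_mem _ hgA⟩
  have hne : f ≠ g := fun h => hgR (h ▸ hfR)
  refine ⟨f, hfA, g, hgA, hne, ?_⟩
  intro x
  by_cases hxT : x ∈ T
  · left
    exact congrFun (rep_restr (A := A) (T := T) hgA) ⟨x, hxT⟩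
  · by_cases hfx : f x = 0
    · right; left; exact hfx
    · by_cases hgx : g x = 0
      · right; right; exact hgx
      · exfalso
        have hxS : x ∈ S := by
          refine mem_iUnion.2 ⟨i', ?_⟩
          rw [chainF_eq]
          exact Or.inr (mem_iUnion.2
            ⟨⟨f, Set.mem_image_of_mem _ hgA⟩, Function.mem_support.2 hfx⟩)
        exact hxT (hBprev ⟨Function.mem_support.2 hgx, hxS⟩)

end SepC0Aux

/-- Let `Γ` be a (discrete) set of cardinality `𝔠⁺`, the successor of the
continuum.  Then every set `A` of norm-one elements of `c₀(Γ)` with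
`‖f − g‖ > 1` for all distinct `f, g ∈ A` has cardinality at most `𝔠`. -/
theorem separated_in_c0_continuum_succ_le_continuum
    (Γ : Type*) [TopologicalSpace Γ] [DiscreteTopology Γ]
    (hΓ : #Γ = Order.succ Cardinal.continuum)
    (A : Set C₀(Γ, ℝ))
    (hA : ∀ f ∈ A, ‖f‖ = 1)
    (hsep : ∀ f ∈ A, ∀ g ∈ A, f ≠ g → 1 < ‖f - g‖) :
    #A ≤ Cardinal.continuum := by
  by_contra hlt
  push_neg at hlt
  -- transfer to plain functions
  set A' : Set (Γ → ℝ) := (fun f : C₀(Γ, ℝ) => ⇑f) '' A with hA'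
  have hmk : #A' = #A := Cardinal.mk_image_eq (f := fun f : C₀(Γ, ℝ) => ⇑f)
    (fun _ _ h => DFunLike.coe_injective h)
  have hcnt : ∀ φ ∈ A', (Function.support φ).Countable := by
    rintro φ ⟨f, _, rfl⟩
    have hzero : Filter.Tendsto f (Filter.cofinite) (nhds 0) := by
      have := zero_at_infty f
      rwa [Filter.cocompact_eq_cofinite Γ] at this
    have hfin : ∀ n : ℕ, {x : Γ | 1 / ((n : ℝ) + 1) ≤ |f x|}.Finite := by
      intro n
      have hpos : (0 : ℝ) < 1 / ((n : ℝ) + 1) := by positivity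
      have hev := Metric.tendsto_nhds.mp hzero _ hpos
      rw [Filter.eventually_cofinite] at hev
      refine hev.subset fun x hx => ?_
      simp only [Set.mem_setOf_eq, not_lt, Real.dist_eq, sub_zero] at *
      exact hx
    have hsub : Function.support ⇑f ⊆ ⋃ n : ℕ, {x : Γ | 1 / ((n : ℝ) + 1) ≤ |f x|} := by
      intro x hx
      have habs : (0 : ℝ) < |f x| := abs_pos.mpr hx
      obtain ⟨n, hn⟩ := exists_nat_one_div_lt habs
      exact Set.mem_iUnion.2 ⟨n, hn.le⟩
    exact (Set.countable_iUnion fun n => (hfin n).countable).mono hsub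
  have hbig : Cardinal.continuum < #A' := hmk ▸ hlt
  obtain ⟨φ, hφ, ψ, hψ, hneφψ, hpt⟩ := SepC0Aux.exists_agree A' hcnt hbig
  obtain ⟨f, hf, rfl⟩ := hφ
  obtain ⟨g, hg, rfl⟩ := hψ
  have hne : f ≠ g := fun h => hneφψ (by rw [h])
  have hpt' : ∀ x, f x = g x ∨ f x = 0 ∨ g x = 0 := hpt
  have hsep' : 1 < ‖f - g‖ := hsep f hf g hg hne
  have hb : ‖f - g‖ ≤ 1 := by
    rw [← ZeroAtInftyContinuousMap.norm_toBCF_eq_norm]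
    refine (BoundedContinuousFunction.norm_le zero_le_one).2 fun x => ?_
    have hptx := hpt' x
    have hfg : (f - g).toBCF x = f x - g x := rfl
    rw [hfg]
    have hfb : ‖f x‖ ≤ 1 := by
      have := BoundedContinuousFunction.norm_coe_le_norm f.toBCF x
      rwa [ZeroAtInftyContinuousMap.norm_toBCF_eq_norm, hA f hf] at this
    have hgb : ‖g x‖ ≤ 1 := by
      have := BoundedContinuousFunction.norm_coe_le_norm g.toBCF x
      rwa [ZeroAtInftyContinuousMap.norm_toBCF_eq_norm, hA g hg] at this
    rcases hptx with h | h | h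
    · rw [h, sub_self, norm_zero]; exact zero_le_one
    · rw [h, zero_sub, norm_neg]; exact hgb
    · rw [h, sub_zero]; exact hfb
  exact absurd hsep' (not_lt.mpr hb)
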